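/- arXiv:0911.2907 — 6 statements merged into one kernel-verified Lean document; each statement's English description precedes it below -/
import Mathlib

section
/- The shift basis functions are linearly independent: let F be a field, f : {0,1}^n → F a function, and x̂ ∈ {0,1}^n a point with f(x̂) ≠ 0. For i = 1,…,n define s_i(x) = 0 if x_i = x̂_i, and s_i(x) = (−1)^{|x+x̂|_1^{i−1}} · f(x + e_i) if x_i ≠ x̂_i (where x + x̂ is bitwise XOR, e_i is the i-th standard bit vector, and |y|_1^{i−1} = y_1 + ⋯ + y_{i−1}). Then s_1,…,s_n, viewed as vectors in F^{2^n}, are linearly independent. -/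
open Finset

/-- Bitwise XOR of bit strings. -/
def bxor {n : ℕ} (x y : Fin n → Bool) : Fin n → Bool := fun i => xor (x i) (y i)

/-- The standard unit bit string `e i`. -/
def eVec {n : ℕ} (i : Fin n) : Fin n → Bool := fun j => decide (j = i)

/-- Hamming weight of a bit string. -/
def wt {n : ℕ} (x : Fin n → Bool) : ℕ := (Finset.univ.filter (fun i => x i = true)).card

/-- Partial Hamming weight `|x|_1^{i-1}`: number of ones strictly below position `i`. -/
def pwt {n : ℕ} (x : Fin n → Bool) (i : Fin n) : ℕ :=
  (Finset.univ.filter (fun j => j < i ∧ x j = true)).card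

/-- The shift basis functions `s_i^f` with base point `xh`. -/
def shiftBasis {F : Type*} [Field F] {n : ℕ} (f : (Fin n → Bool) → F) (xh : Fin n → Bool)
    (i : Fin n) : (Fin n → Bool) → F := fun x =>
  if x i = xh i then 0 else (-1 : F) ^ (pwt (bxor x xh) i) * f (bxor x (eVec i))

/-- The Pfaffian of an `n × n` matrix, defined by recursive expansion along the last
row/column (agreeing with the usual sum over pairings for strongly skew-symmetric matrices). -/
def pf {R : Type*} [CommRing R] : (n : ℕ) → Matrix (Fin n) (Fin n) R → R
  | 0, _ => 1
  | 1, _ => 0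
  | n+2, M => ∑ i : Fin (n+1),
      (-1 : R) ^ (i : ℕ) * M i.castSucc (Fin.last (n+1)) *
        pf n (M.submatrix (fun j => (i.succAbove j).castSucc)
          (fun j => (i.succAbove j).castSucc))

/-- The sub-Pfaffian `Pf(M_x)`: Pfaffian of the principal submatrix of `M` keeping
row and column `i` exactly when `x i = true`. -/
def subPf {R : Type*} [CommRing R] {n : ℕ} (M : Matrix (Fin n) (Fin n) R)
    (x : Fin n → Bool) : R :=
  let s : Finset (Fin n) := Finset.univ.filter (fun i => x i = true)
  pf s.card (M.submatrix (fun j => s.orderEmbOfFin rfl j) (fun j => s.orderEmbOfFin rfl j))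

/-- A matrix is strongly skew-symmetric if `Mᵀ = -M` and all diagonal entries vanish. -/
def StronglySkew {R : Type*} [CommRing R] {n : ℕ} (M : Matrix (Fin n) (Fin n) R) : Prop :=
  (∀ i j, M j i = -M i j) ∧ ∀ i, M i i = 0

/-- `f` is an `n`-bit standard signature over `F`: it is identically zero, or a
translation and nonzero scaling of a sub-Pfaffian function `x ↦ Pf(M_x)` of a
strongly skew-symmetric matrix. -/
def IsStdSig {F : Type*} [Field F] {n : ℕ} (f : (Fin n → Bool) → F) : Prop :=
  (∀ x, f x = 0) ∨
  ∃ (β : F) (xh : Fin n → Bool) (M : Matrix (Fin n) (Fin n) F),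
    β ≠ 0 ∧ StronglySkew M ∧ ∀ x, f x = β * subPf M (bxor x xh)

/-- Strictly even parity standard signatures (the set `A_n^{even}`). -/
def IsEvenSig {F : Type*} [Field F] {n : ℕ} (f : (Fin n → Bool) → F) : Prop :=
  IsStdSig f ∧ (∃ x, f x ≠ 0) ∧ ∀ x, Odd (wt x) → f x = 0

/-- Strictly odd parity standard signatures (the set `A_n^{odd}`). -/
def IsOddSig {F : Type*} [Field F] {n : ℕ} (f : (Fin n → Bool) → F) : Prop :=
  IsStdSig f ∧ (∃ x, f x ≠ 0) ∧ ∀ x, Even (wt x) → f x = 0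

/-- `B_n`: the set of normalized standard signatures, i.e. sub-Pfaffian functions. -/
def Bset (F : Type*) [Field F] (n : ℕ) : Set ((Fin n → Bool) → F) :=
  {f | ∃ M : Matrix (Fin n) (Fin n) F, StronglySkew M ∧ ∀ x, f x = subPf M x}

/-- the shift basis functions of `f` at a base point `x̂` with
`f(x̂) ≠ 0` are linearly independent as vectors in `F^(2^n)`. -/
theorem shiftBasis_linearIndependent {F : Type*} [Field F] {n : ℕ}
    (f : (Fin n → Bool) → F) (xh : Fin n → Bool) (hf : f xh ≠ 0) :
    LinearIndependent F (fun i : Fin n => shiftBasis f xh i) := by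
  rw [Fintype.linearIndependent_iff]
  intro g hg j
  set y := bxor xh (eVec j) with hy
  have hyi : ∀ i, y i = xor (xh i) (decide (i = j)) := fun i => rfl
  have hdiag : shiftBasis f xh j y = f xh := by
    have h1 : bxor y xh = eVec j := by
      funext i; simp only [bxor, eVec, hyi]; cases xh i <;> simp
    have h2 : bxor y (eVec j) = xh := by
      funext i; simp only [bxor, eVec, hyi]; cases xh i <;> simp
    have h3 : pwt (eVec j) j = 0 := by
      simp only [pwt, Finset.card_eq_zero]
      rw [Finset.filter_eq_empty_iff]
      intro k _
      simp only [eVec, decide_eq_true_eq, not_and]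
      intro hk hkj; exact absurd hkj (Fin.ne_of_lt hk)
    rw [shiftBasis, if_neg (by rw [hyi]; cases xh j <;> simp), h1, h2, h3]
    simp
  have hoff : ∀ i, i ≠ j → shiftBasis f xh i y = 0 := by
    intro i hij
    rw [shiftBasis, if_pos (by rw [hyi]; simp [hij])]
  have := congrFun hg y
  simp only [Finset.sum_apply, Pi.smul_apply, Pi.zero_apply, smul_eq_mul] at this
  rw [Finset.sum_eq_single j (fun b _ hbj => by rw [hoff b hbj, mul_zero])
    (by simp), hdiag] at this
  exact (mul_eq_zero.mp this).resolve_right hf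
end

section
/- If f : {0,1}^n → F has even parity (f(x) = 0 whenever the Hamming weight |x| is odd) and g lies in the span of the shift basis functions s_1,…,s_n of f (with respect to some base point x̂ with f(x̂) ≠ 0 of even Hamming weight), then g has odd parity: g(x) = 0 whenever |x| is even. -/
open Finset

lemma wt_flip_parity {n : ℕ} (x : Fin n → Bool) (i : Fin n) (hx : Even (wt x)) :
    Odd (wt (bxor x (eVec i))) := by
  unfold wt at *
  by_cases hxi : x i = true
  · have hset : Finset.univ.filter (fun j => bxor x (eVec i) j = true)
        = (Finset.univ.filter (fun j => x j = true)).erase i := by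
      ext j
      simp only [Finset.mem_filter, Finset.mem_erase, Finset.mem_univ, true_and, bxor, eVec]
      by_cases hji : j = i
      · subst hji; simp [hxi]
      · simp [hji]
    rw [hset, Finset.card_erase_of_mem (by simp [hxi])]
    have hpos : 0 < (Finset.univ.filter (fun j => x j = true)).card :=
      Finset.card_pos.mpr ⟨i, by simp [hxi]⟩
    rcases hx with ⟨k, hk⟩
    exact ⟨k - 1, by omega⟩
  · have hset : Finset.univ.filter (fun j => bxor x (eVec i) j = true)
        = insert i (Finset.univ.filter (fun j => x j = true)) := by
      ext j
      simp only [Finset.mem_filter, Finset.mem_insert, Finset.mem_univ, true_and, bxor, eVec]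
      by_cases hji : j = i
      · subst hji; simp [hxi]
      · simp [hji]
    rw [hset, Finset.card_insert_of_notMem (by simp [hxi])]
    rcases hx with ⟨k, hk⟩
    exact ⟨k, by omega⟩

/-- if `f` has even parity and `g` lies in the span of the shift basis
functions of `f` at an even-weight base point `x̂` with `f(x̂) ≠ 0`, then `g` has odd
parity. -/
theorem span_shiftBasis_odd_parity {F : Type*} [Field F] {n : ℕ}
    (f g : (Fin n → Bool) → F) (xh : Fin n → Bool)
    (hf : f xh ≠ 0) (hxh : Even (wt xh))
    (hpar : ∀ x, Odd (wt x) → f x = 0)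
    (hg : g ∈ Submodule.span F (Set.range (fun i : Fin n => shiftBasis f xh i))) :
    ∀ x, Even (wt x) → g x = 0 := by
  intro x hx
  have hgen : ∀ i : Fin n, shiftBasis f xh i x = 0 := by
    intro i
    unfold shiftBasis
    by_cases h : x i = xh i
    · simp [h]
    · rw [if_neg h, hpar _ (wt_flip_parity x i hx), mul_zero]
  induction hg using Submodule.span_induction with
  | mem g hgm => obtain ⟨i, rfl⟩ := hgm; exact hgen i
  | zero => rfl
  | add a b _ _ ha hb => show a x + b x = 0; rw [ha, hb, add_zero]
  | smul c a _ ha => show c * a x = 0; rw [ha, mul_zero]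
end

section
/- Recursive structure of sub-Pfaffian functions: let M be an (n+1)×(n+1) strongly skew-symmetric matrix over F and f(x) = Pf(M_x) for x ∈ {0,1}^{n+1}. Write f̲_0(y) = f(y0) and f̲_1(y) = f(y1) for y ∈ {0,1}^n. Then f̲_0(y) = Pf(M'_y) where M' is the top-left n×n block of M, and f̲_1 = Σ_{i=1}^n m(i, n+1) · s_i, where s_i are the shift basis functions of f̲_0 with base point 0…0: s_i(y) = 0 if y_i = 0 and s_i(y) = (−1)^{|y|_1^{i−1}} f̲_0(y + e_i) if y_i = 1. -/
open Finset

lemma subPf_eq {R : Type*} [CommRing R] {n : ℕ} (M : Matrix (Fin n) (Fin n) R)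
    (x : Fin n → Bool) {k : ℕ}
    (hk : (Finset.univ.filter (fun i => x i = true)).card = k)
    (e : Fin k → Fin n) (hmem : ∀ j, x (e j) = true) (hmono : StrictMono e) :
    subPf M x = pf k (M.submatrix e e) := by
  subst hk
  have he : e = (Finset.univ.filter (fun i => x i = true)).orderEmbOfFin rfl :=
    Finset.orderEmbOfFin_unique rfl (fun j => by simp [hmem j]) hmono
  simp only [subPf]
  rw [he]

/-- recursive structure of sub-Pfaffian functions: restricting the
last bit to `0` gives the sub-Pfaffian of the top-left block, and restricting it to
`1` gives a linear combination of the shift basis functions at base point `0⋯0`. -/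
theorem subPf_recursion {F : Type*} [Field F] {n : ℕ}
    (M : Matrix (Fin (n+1)) (Fin (n+1)) F) (hM : StronglySkew M) :
    (∀ y : Fin n → Bool,
      subPf M (Fin.snoc y false) = subPf (M.submatrix Fin.castSucc Fin.castSucc) y) ∧
    (∀ y : Fin n → Bool,
      subPf M (Fin.snoc y true) =
        ∑ i : Fin n, M i.castSucc (Fin.last n) *
          shiftBasis (fun z => subPf (M.submatrix Fin.castSucc Fin.castSucc) z)
            (fun _ => false) i y) := by
  constructor
  · intro y
    set t : Finset (Fin n) := Finset.univ.filter (fun i => y i = true) with ht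
    have hset : Finset.univ.filter (fun i : Fin (n+1) => (Fin.snoc y false : Fin (n+1) → Bool) i = true)
        = t.map ⟨Fin.castSucc, Fin.castSucc_injective n⟩ := by
      ext a
      induction a using Fin.lastCases with
      | last => simp [Fin.snoc_last, (Fin.castSucc_lt_last _).ne]
      | cast j => simp [Fin.snoc_castSucc, ht]
    have hmem0 : ∀ j, y (t.orderEmbOfFin rfl j) = true := by
      intro j
      have h := Finset.orderEmbOfFin_mem t rfl j
      exact (Finset.mem_filter.mp h).2
    rw [subPf_eq M _ (by rw [hset, card_map]) (fun j => (t.orderEmbOfFin rfl j).castSucc)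
        (fun j => by simp [Fin.snoc_castSucc, hmem0 j])
        (Fin.strictMono_castSucc.comp (t.orderEmbOfFin rfl).strictMono),
      subPf_eq _ y rfl (fun j => t.orderEmbOfFin rfl j) (fun j => hmem0 j)
        (t.orderEmbOfFin rfl).strictMono]
    rfl
  · intro y
    set t : Finset (Fin n) := Finset.univ.filter (fun i => y i = true) with ht
    obtain ⟨k, hk⟩ : ∃ k, t.card = k := ⟨_, rfl⟩
    set e0 : Fin k → Fin n := fun j => t.orderEmbOfFin hk j with he0
    have hmem0 : ∀ j, y (e0 j) = true := fun j =>
      (Finset.mem_filter.mp (Finset.orderEmbOfFin_mem t hk j)).2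
    have hmono0 : StrictMono e0 := (t.orderEmbOfFin hk).strictMono
    have hset : Finset.univ.filter
          (fun i : Fin (n+1) => (Fin.snoc y true : Fin (n+1) → Bool) i = true)
        = insert (Fin.last n) (t.map ⟨Fin.castSucc, Fin.castSucc_injective n⟩) := by
      ext a
      induction a using Fin.lastCases with
      | last => simp [Fin.snoc_last]
      | cast j => simp [Fin.snoc_castSucc, ht, (Fin.castSucc_lt_last j).ne]
    have hScard : (Finset.univ.filter
        (fun i : Fin (n+1) => (Fin.snoc y true : Fin (n+1) → Bool) i = true)).card = k + 1 := by
      have hnm : Fin.last n ∉ t.map ⟨Fin.castSucc, Fin.castSucc_injective n⟩ := by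
        simp only [Finset.mem_map, Function.Embedding.coeFn_mk, not_exists, not_and]
        exact fun x _ => (Fin.castSucc_lt_last x).ne
      rw [hset, Finset.card_insert_of_notMem hnm, card_map, hk]
    -- rewrite the RHS as a sum over `Fin k`
    have himg : Finset.image e0 Finset.univ = t := by
      apply Finset.coe_injective
      rw [Finset.coe_image, Finset.coe_univ, Set.image_univ, he0]
      exact t.range_orderEmbOfFin hk
    have hpwt : ∀ j : Fin k, pwt y (e0 j) = (j : ℕ) := by
      intro j
      have hfilt : Finset.univ.filter (fun a : Fin n => a < e0 j ∧ y a = true)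
          = Finset.image e0 (Finset.Iio j) := by
        ext a
        simp only [Finset.mem_filter, Finset.mem_univ, true_and, Finset.mem_image,
          Finset.mem_Iio]
        constructor
        · rintro ⟨hlt, hy⟩
          have ha : a ∈ t := by simp [ht, hy]
          rw [← himg, Finset.mem_image] at ha
          obtain ⟨j', -, rfl⟩ := ha
          exact ⟨j', hmono0.lt_iff_lt.mp hlt, rfl⟩
        · rintro ⟨j', hj', rfl⟩
          exact ⟨hmono0 hj', hmem0 j'⟩
      rw [pwt, hfilt, Finset.card_image_of_injective _ hmono0.injective, Fin.card_Iio]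
    have hbxor : bxor y (fun _ => false) = y := by
      funext a; simp [bxor]
    have hRHS : ∑ i : Fin n, M i.castSucc (Fin.last n) *
          shiftBasis (fun z => subPf (M.submatrix Fin.castSucc Fin.castSucc) z)
            (fun _ => false) i y
        = ∑ j : Fin k, M (e0 j).castSucc (Fin.last n) *
            ((-1 : F) ^ (j : ℕ) *
              subPf (M.submatrix Fin.castSucc Fin.castSucc) (bxor y (eVec (e0 j)))) := by
      rw [← Finset.sum_subset (Finset.subset_univ t) (fun a _ ha => by
        have hya : y a = false := by
          simpa [ht] using ha
        simp [shiftBasis, hya])]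
      rw [← himg, Finset.sum_image (fun a _ b _ h => hmono0.injective h)]
      refine Finset.sum_congr rfl (fun j _ => ?_)
      rw [shiftBasis, hbxor, hmem0 j, hpwt j]
      simp
    rw [hRHS]
    clear hRHS
    -- case split on k
    cases k with
    | zero =>
      rw [subPf_eq M _ hScard (fun _ => Fin.last n)
        (fun j => by simp [Fin.snoc_last]) (by intro a b hab; have := a.isLt; have := b.isLt; omega)]
      simp [pf]
    | succ m =>
      set E : Fin (m+2) → Fin (n+1) :=
        Fin.snoc (fun j : Fin (m+1) => (e0 j).castSucc) (Fin.last n) with hE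
      have hEc : ∀ j : Fin (m+1), E j.castSucc = (e0 j).castSucc := by
        intro j; rw [hE]; exact Fin.snoc_castSucc _ _ _
      have hEl : E (Fin.last (m+1)) = Fin.last n := by
        rw [hE]; exact Fin.snoc_last _ _
      have hEmono : StrictMono E := by
        intro a b hab
        induction b using Fin.lastCases with
        | last =>
          obtain ⟨a', rfl⟩ := Fin.exists_castSucc_eq.mpr (Fin.ne_last_of_lt hab)
          rw [hEc, hEl]
          exact Fin.castSucc_lt_last _
        | cast b' =>
          obtain ⟨a', rfl⟩ := Fin.exists_castSucc_eq.mpr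
            (Fin.ne_last_of_lt (hab.trans (Fin.castSucc_lt_last _)))
          rw [hEc, hEc]
          exact Fin.strictMono_castSucc (hmono0 (Fin.castSucc_lt_castSucc_iff.mp hab))
      have hEmem : ∀ j, (Fin.snoc y true : Fin (n+1) → Bool) (E j) = true := by
        intro j
        induction j using Fin.lastCases with
        | last => rw [hEl]; exact Fin.snoc_last _ _
        | cast j' => rw [hEc]; rw [Fin.snoc_castSucc]; exact hmem0 j'
      rw [subPf_eq M _ hScard E hEmem hEmono]
      show (∑ i : Fin (m+1), (-1 : F) ^ (i : ℕ) *
          (M.submatrix E E) i.castSucc (Fin.last (m+1)) *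
          pf m ((M.submatrix E E).submatrix (fun j => (i.succAbove j).castSucc)
            (fun j => (i.succAbove j).castSucc))) = _
      refine Finset.sum_congr rfl (fun i _ => ?_)
      have hinner : pf m ((M.submatrix E E).submatrix (fun j => (i.succAbove j).castSucc)
            (fun j => (i.succAbove j).castSucc))
          = subPf (M.submatrix Fin.castSucc Fin.castSucc) (bxor y (eVec (e0 i))) := by
        have hbcard : (Finset.univ.filter
            (fun a : Fin n => bxor y (eVec (e0 i)) a = true)).card = m := by
          have : Finset.univ.filter (fun a : Fin n => bxor y (eVec (e0 i)) a = true)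
              = t.erase (e0 i) := by
            ext a
            simp only [bxor, eVec, Finset.mem_erase, Finset.mem_filter, Finset.mem_univ,
              true_and, ht]
            by_cases h : a = e0 i
            · subst h; simp [hmem0 i]
            · simp [h]
          rw [this, Finset.card_erase_of_mem (by
            rw [← himg]; exact Finset.mem_image_of_mem _ (Finset.mem_univ i)), hk]
          rfl
        rw [subPf_eq _ _ hbcard (fun j => e0 (i.succAbove j))
          (fun j => by
            have hne : e0 (i.succAbove j) ≠ e0 i :=
              fun h => Fin.succAbove_ne i j (hmono0.injective h)
            simp [bxor, eVec, hne, hmem0])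
          (hmono0.comp (Fin.strictMono_succAbove i))]
        congr 1
        ext a b
        simp [Matrix.submatrix, hEc]
      rw [hinner]
      have hM : (M.submatrix E E) i.castSucc (Fin.last (m+1)) =
          M (e0 i).castSucc (Fin.last n) := by
        simp [Matrix.submatrix, hEc, hEl]
      rw [hM]
      ring
end

section
/- Define B_n, the set of normalized standard signatures over a field F, as the set of functions {0,1}^n → F of the form x ↦ Pf(M_x) for some n×n strongly skew-symmetric matrix M. Then B_{n+1} = { f : {0,1}^{n+1} → F | f̲_0 ∈ B_n and f̲_1 lies in the span of the shift basis functions s_1^{f̲_0},…,s_n^{f̲_0} with base point 0…0 }. -/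
open Finset

section Helpers
variable {F : Type*} [Field F] {n : ℕ}

def supp {n : ℕ} (x : Fin n → Bool) : Finset (Fin n) :=
  Finset.univ.filter (fun i => x i = true)

lemma supp_snoc_false (y : Fin n → Bool) :
    supp (Fin.snoc y false : Fin (n+1) → Bool)
      = (supp y).map Fin.castSuccOrderEmb.toEmbedding := by
  ext i
  induction i using Fin.lastCases with
  | last => simp [supp, Fin.castSuccOrderEmb, Fin.snoc_last,
      (Fin.castSucc_lt_last _).ne]
  | cast i' => simp [supp, Fin.castSuccOrderEmb, Fin.snoc_castSucc, Fin.castSucc_inj]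

lemma supp_snoc_true (y : Fin n → Bool) :
    supp (Fin.snoc y true : Fin (n+1) → Bool)
      = insert (Fin.last n) ((supp y).map Fin.castSuccOrderEmb.toEmbedding) := by
  ext i
  induction i using Fin.lastCases with
  | last => simp [supp, Fin.snoc_last]
  | cast i' => simp [supp, Fin.castSuccOrderEmb, Fin.snoc_castSucc, Fin.castSucc_inj,
      (Fin.castSucc_lt_last _).ne]

lemma last_not_mem_map (s : Finset (Fin n)) :
    Fin.last n ∉ s.map Fin.castSuccOrderEmb.toEmbedding := by
  simp [Fin.castSuccOrderEmb, (Fin.castSucc_lt_last _).ne]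

lemma supp_bxor_eVec (y : Fin n → Bool) (b : Fin n) (hb : y b = true) :
    supp (bxor y (eVec b)) = (supp y).erase b := by
  ext j
  rcases eq_or_ne j b with rfl | hj
  · simp [supp, bxor, eVec, hb]
  · simp [supp, bxor, eVec, hj]

lemma bxor_zero (y : Fin n → Bool) : bxor y (fun _ => false) = y := by
  funext i; simp [bxor]

lemma pwt_eq_card (y : Fin n → Bool) (b : Fin n) :
    pwt y b = ((supp y).filter (· < b)).card := by
  unfold pwt supp
  rw [Finset.filter_filter]
  congr 1
  ext j
  simp [Finset.mem_filter, and_comm]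

end Helpers


section Pfin
variable {R : Type*} [CommRing R]

def pfin {m : ℕ} (s : Finset (Fin m)) (M : Matrix (Fin m) (Fin m) R) : R :=
  pf s.card (M.submatrix (fun j => s.orderEmbOfFin rfl j) (fun j => s.orderEmbOfFin rfl j))

lemma pf_submatrix_eq_pfin {m k : ℕ} (s : Finset (Fin m)) (h : s.card = k)
    (M : Matrix (Fin m) (Fin m) R) (f : Fin k → Fin m) (hf : ∀ i, f i ∈ s)
    (hmono : StrictMono f) : pf k (M.submatrix f f) = pfin s M := by
  subst h
  rw [Finset.orderEmbOfFin_unique rfl hf hmono]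
  rfl

lemma pfin_submatrix {k m : ℕ} (e : Fin k ↪o Fin m) (s : Finset (Fin k))
    (M : Matrix (Fin m) (Fin m) R) :
    pfin s (M.submatrix e e) = pfin (s.map e.toEmbedding) M := by
  unfold pfin
  rw [Matrix.submatrix_submatrix]
  exact pf_submatrix_eq_pfin _ (Finset.card_map _) M _
    (fun i => Finset.mem_map_of_mem _ (Finset.orderEmbOfFin_mem s rfl i))
    (e.strictMono.comp (s.orderEmbOfFin rfl).strictMono)

lemma card_filter_lt_orderEmbOfFin {α : Type*} [LinearOrder α] (t : Finset α) {k : ℕ}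
    (h : t.card = k) (i : Fin k) :
    (t.filter (· < t.orderEmbOfFin h i)).card = (i : ℕ) := by
  have himg : t.filter (· < t.orderEmbOfFin h i)
      = (Finset.univ.filter (· < i)).image (t.orderEmbOfFin h) := by
    ext a
    simp only [Finset.mem_filter, Finset.mem_image, Finset.mem_univ, true_and]
    constructor
    · rintro ⟨hat, hlt⟩
      have : a ∈ Set.range (t.orderEmbOfFin h) := by
        rw [Finset.range_orderEmbOfFin]; exact hat
      obtain ⟨j, rfl⟩ := this
      exact ⟨j, (t.orderEmbOfFin h).strictMono.lt_iff_lt.mp hlt, rfl⟩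
    · rintro ⟨j, hj, rfl⟩
      exact ⟨Finset.orderEmbOfFin_mem t h j, (t.orderEmbOfFin h).strictMono hj⟩
  rw [himg, Finset.card_image_of_injective _ (t.orderEmbOfFin h).injective]
  have : Finset.univ.filter (· < i) = Finset.Iio i := by ext j; simp
  rw [this, Fin.card_Iio]
lemma pfin_insert_last {m : ℕ} (M : Matrix (Fin (m+1)) (Fin (m+1)) R)
    (t : Finset (Fin (m+1))) (ht : Fin.last m ∉ t) :
    pfin (insert (Fin.last m) t) M =
      ∑ a ∈ t, (-1 : R) ^ (t.filter (· < a)).card * M a (Fin.last m) * pfin (t.erase a) M := by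
  classical
  have hlt : ∀ a ∈ t, a < Fin.last m := fun a ha =>
    lt_of_le_of_ne (Fin.le_last a) (fun h => ht (h ▸ ha))
  obtain ⟨k, hkt⟩ : ∃ k, t.card = k := ⟨_, rfl⟩
  have hcard : (insert (Fin.last m) t).card = k + 1 := by
    rw [Finset.card_insert_of_notMem ht, hkt]
  set oE : Fin k → Fin (m+1) := ⇑(t.orderEmbOfFin hkt) with hoE
  set f : Fin (k+1) → Fin (m+1) := Fin.snoc oE (Fin.last m) with hf
  have hfmem : ∀ i, f i ∈ insert (Fin.last m) t := by
    intro i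
    refine Fin.lastCases ?_ ?_ i
    · simp [hf, Finset.mem_insert]
    · intro i'
      simp only [hf, Fin.snoc_castSucc]
      exact Finset.mem_insert_of_mem (Finset.orderEmbOfFin_mem t hkt i')
  have hfmono : StrictMono f := by
    intro a b hab
    induction b using Fin.lastCases with
    | last =>
      obtain ⟨a', rfl⟩ := Fin.exists_castSucc_eq.mpr (Fin.ne_last_of_lt hab)
      simp only [hf, Fin.snoc_castSucc, Fin.snoc_last]
      exact hlt _ (Finset.orderEmbOfFin_mem t hkt a')
    | cast b' =>
      obtain ⟨a', rfl⟩ := Fin.exists_castSucc_eq.mpr (Fin.ne_last_of_lt hab)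
      simp only [hf, Fin.snoc_castSucc]
      exact (t.orderEmbOfFin hkt).strictMono (Fin.castSucc_lt_castSucc_iff.mp hab)
  rw [← pf_submatrix_eq_pfin _ hcard M f hfmem hfmono]
  cases k with
  | zero =>
    rw [Finset.card_eq_zero.mp hkt]
    simp only [pf, Finset.sum_empty]
  | succ j =>
    simp only [pf, Matrix.submatrix_apply, Matrix.submatrix_submatrix]
    have hfc : ∀ i : Fin (j+1), f i.castSucc = oE i := fun i => Fin.snoc_castSucc _ _ i
    have hfl : f (Fin.last (j+1)) = Fin.last m := Fin.snoc_last _ _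
    have hinner : ∀ i : Fin (j+1),
        pf j (M.submatrix (f ∘ fun j' => (i.succAbove j').castSucc)
          (f ∘ fun j' => (i.succAbove j').castSucc)) = pfin (t.erase (oE i)) M := by
      intro i
      have hcomp : (f ∘ fun j' => (i.succAbove j').castSucc) = fun j' => oE (i.succAbove j') := by
        funext j'
        simp only [Function.comp_apply, hfc]
      rw [hcomp]
      refine pf_submatrix_eq_pfin _ ?_ M _ ?_ ?_
      · rw [Finset.card_erase_of_mem (Finset.orderEmbOfFin_mem t hkt i), hkt]; omega
      · intro j'
        refine Finset.mem_erase.mpr ⟨?_, Finset.orderEmbOfFin_mem t hkt _⟩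
        exact fun h => Fin.succAbove_ne i j' ((t.orderEmbOfFin hkt).injective h)
      · exact (t.orderEmbOfFin hkt).strictMono.comp (Fin.strictMono_succAbove i)
    refine Finset.sum_bij (fun i _ => oE i) (fun i _ => Finset.orderEmbOfFin_mem t hkt i)
      (fun i _ i' _ h => (t.orderEmbOfFin hkt).injective h) ?_ ?_
    · intro a ha
      have : a ∈ Set.range (t.orderEmbOfFin hkt) := by
        rw [Finset.range_orderEmbOfFin]; exact ha
      obtain ⟨i, rfl⟩ := this
      exact ⟨i, Finset.mem_univ i, rfl⟩
    · intro i _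
      rw [hinner, hfc, hfl, card_filter_lt_orderEmbOfFin t hkt i]

end Pfin

section SubPf
variable {F : Type*} [Field F] {n : ℕ}

lemma subPf_eq_pfin (M : Matrix (Fin n) (Fin n) F) (x : Fin n → Bool) :
    subPf M x = pfin (supp x) M := rfl

lemma cemb_apply (b : Fin n) : Fin.castSuccOrderEmb.toEmbedding b = b.castSucc := rfl

lemma subPf_snoc_false (M : Matrix (Fin (n+1)) (Fin (n+1)) F) (y : Fin n → Bool) :
    subPf M (Fin.snoc y false) = subPf (M.submatrix Fin.castSucc Fin.castSucc) y := by
  rw [subPf_eq_pfin, subPf_eq_pfin, supp_snoc_false]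
  exact (pfin_submatrix Fin.castSuccOrderEmb (supp y) M).symm

lemma subPf_snoc_true (M : Matrix (Fin (n+1)) (Fin (n+1)) F) (y : Fin n → Bool) :
    subPf M (Fin.snoc y true) =
      ∑ i : Fin n, M i.castSucc (Fin.last n) *
        shiftBasis (fun z => subPf (M.submatrix Fin.castSucc Fin.castSucc) z)
          (fun _ => false) i y := by
  classical
  rw [subPf_eq_pfin, supp_snoc_true, pfin_insert_last _ _ (last_not_mem_map _),
    Finset.sum_map]
  have hR : ∀ i ∈ (Finset.univ : Finset (Fin n)), i ∉ supp y →
      M i.castSucc (Fin.last n) *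
        shiftBasis (fun z => subPf (M.submatrix Fin.castSucc Fin.castSucc) z)
          (fun _ => false) i y = 0 := by
    intro i _ hi
    have hyi : y i = false := by simpa [supp] using hi
    simp [shiftBasis, hyi]
  rw [← Finset.sum_subset (Finset.subset_univ (supp y)) hR]
  refine Finset.sum_congr rfl ?_
  intro b hb
  have hyb : y b = true := by simpa [supp] using hb
  have hfilter : (((supp y).map Fin.castSuccOrderEmb.toEmbedding).filter
      (· < Fin.castSuccOrderEmb.toEmbedding b)).card = pwt y b := by
    rw [Finset.filter_map, Finset.card_map, pwt_eq_card]
    congr 1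
  have herase : ((supp y).map Fin.castSuccOrderEmb.toEmbedding).erase
      (Fin.castSuccOrderEmb.toEmbedding b)
      = ((supp y).erase b).map Fin.castSuccOrderEmb.toEmbedding :=
    (Finset.map_erase _ _ _).symm
  rw [hfilter, herase, ← pfin_submatrix Fin.castSuccOrderEmb, cemb_apply]
  rw [← supp_bxor_eVec y b hyb, ← subPf_eq_pfin,
    show (M.submatrix ⇑Fin.castSuccOrderEmb ⇑Fin.castSuccOrderEmb : Matrix _ _ F)
      = M.submatrix Fin.castSucc Fin.castSucc from rfl]
  simp only [shiftBasis, hyb, bxor_zero, if_neg (by simp : ¬ (true = false))]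
  ring

end SubPf


/-- recursive characterization of the normalized standard signatures:
`f ∈ B_{n+1}` iff `f̲_0 ∈ B_n` and `f̲_1` lies in the span of the shift basis
functions of `f̲_0` at base point `0⋯0`. -/
theorem Bset_recursion {F : Type*} [Field F] {n : ℕ} :
    Bset F (n+1) = {f : (Fin (n+1) → Bool) → F |
      (fun y => f (Fin.snoc y false)) ∈ Bset F n ∧
      ∃ c : Fin n → F, ∀ y : Fin n → Bool,
        f (Fin.snoc y true) =
          ∑ i : Fin n, c i * shiftBasis (fun z => f (Fin.snoc z false))
            (fun _ => false) i y} := by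
  classical
  ext f
  simp only [Bset, Set.mem_setOf_eq]
  constructor
  · rintro ⟨M, hsk, hf⟩
    refine ⟨⟨M.submatrix Fin.castSucc Fin.castSucc,
      ⟨fun i j => hsk.1 _ _, fun i => hsk.2 _⟩, fun y => ?_⟩,
      fun i => M i.castSucc (Fin.last n), fun y => ?_⟩
    · rw [hf, subPf_snoc_false]
    · simp only [hf, subPf_snoc_false]
      exact subPf_snoc_true M y
  · rintro ⟨⟨M', hsk', h0⟩, c, h1⟩
    have h0' : ∀ y, f (Fin.snoc y false) = subPf M' y := h0
    set M : Matrix (Fin (n+1)) (Fin (n+1)) F := fun i =>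
      Fin.lastCases (fun j => Fin.lastCases 0 (fun j' => -(c j')) j)
        (fun i' => fun j => Fin.lastCases (c i') (fun j' => M' i' j') j) i with hM
    have hsub : M.submatrix Fin.castSucc Fin.castSucc = M' := by
      ext i j
      show M i.castSucc j.castSucc = M' i j
      simp [hM, Matrix.submatrix_apply]
    have hcol : ∀ i : Fin n, M i.castSucc (Fin.last n) = c i := by
      intro i; simp [hM]
    refine ⟨M, ⟨?_, ?_⟩, ?_⟩
    · intro i j
      induction i using Fin.lastCases with
      | last =>
        induction j using Fin.lastCases with
        | last => simp [hM]
        | cast j' => simp [hM]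
      | cast i' =>
        induction j using Fin.lastCases with
        | last => simp [hM]
        | cast j' => simp [hM, hsk'.1 i' j']
    · intro i
      induction i using Fin.lastCases with
      | last => simp [hM]
      | cast i' => simp [hM, hsk'.2 i']
    · intro x
      obtain ⟨y, b, rfl⟩ : ∃ y b, x = Fin.snoc y b :=
        ⟨Fin.init x, x (Fin.last n), (Fin.snoc_init_self x).symm⟩
      cases b
      · rw [subPf_snoc_false, hsub]; exact h0' y
      · rw [h1, subPf_snoc_true, hsub]
        simp only [hcol, h0']
end

section
/- Over a finite field F with |F| = s, the number of normalized standard signatures on n bits is |B_n| = s^{n(n−1)/2}. Equivalently, the map M ↦ (x ↦ Pf(M_x)) from n×n strongly skew-symmetric matrices to B_n is a bijection. -/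
open Finset

section Aux

variable {R : Type*} [CommRing R] {n : ℕ}

lemma pf_two (A : Matrix (Fin 2) (Fin 2) R) : pf 2 A = A 0 1 := by
  simp [pf, Fin.sum_univ_one]

lemma pf_cast {m k : ℕ} (h : m = k) (A : Matrix (Fin m) (Fin m) R) :
    pf m A = pf k (A.submatrix (Fin.cast h.symm) (Fin.cast h.symm)) := by
  subst h; rfl

lemma pair_filter (i j : Fin n) :
    Finset.univ.filter (fun k => (decide (k = i ∨ k = j) : Bool) = true)
      = ({i, j} : Finset (Fin n)) := by
  ext k; simp

lemma pair_card {i j : Fin n} (hij : i < j) : ({i, j} : Finset (Fin n)).card = 2 := by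
  rw [Finset.card_insert_of_notMem (by simp [hij.ne]), Finset.card_singleton]

lemma emb_pair {i j : Fin n} (hij : i < j)
    (k0 k1 : Fin ({i, j} : Finset (Fin n)).card) (hk : k0 < k1) :
    ({i, j} : Finset (Fin n)).orderEmbOfFin rfl k0 = i ∧
    ({i, j} : Finset (Fin n)).orderEmbOfFin rfl k1 = j := by
  have m0 := Finset.orderEmbOfFin_mem ({i, j} : Finset (Fin n)) rfl k0
  have m1 := Finset.orderEmbOfFin_mem ({i, j} : Finset (Fin n)) rfl k1
  have hlt : ({i, j} : Finset (Fin n)).orderEmbOfFin rfl k0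
      < ({i, j} : Finset (Fin n)).orderEmbOfFin rfl k1 :=
    (Finset.orderEmbOfFin ({i, j} : Finset (Fin n)) rfl).strictMono hk
  simp only [Finset.mem_insert, Finset.mem_singleton] at m0 m1
  rcases m0 with h0 | h0 <;> rcases m1 with h1 | h1
  · rw [h0, h1] at hlt; exact absurd hlt (lt_irrefl _)
  · exact ⟨h0, h1⟩
  · rw [h0, h1] at hlt; exact absurd (hlt.trans hij) (lt_irrefl _)
  · rw [h0, h1] at hlt; exact absurd hlt (lt_irrefl _)

lemma subPf_eq_of (M : Matrix (Fin n) (Fin n) R) (x : Fin n → Bool) (s : Finset (Fin n))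
    (hs : Finset.univ.filter (fun i => x i = true) = s) :
    subPf M x = pf s.card (M.submatrix (fun j => s.orderEmbOfFin rfl j)
      (fun j => s.orderEmbOfFin rfl j)) := by
  subst hs; rfl

lemma subPf_pair (M : Matrix (Fin n) (Fin n) R) {i j : Fin n} (hij : i < j) :
    subPf M (fun k => decide (k = i ∨ k = j)) = M i j := by
  have hcard := pair_card hij
  rw [subPf_eq_of M _ ({i, j} : Finset (Fin n)) (pair_filter i j)]
  rw [pf_cast hcard, pf_two]
  simp only [Matrix.submatrix_apply]
  have hk : (Fin.cast hcard.symm (0 : Fin 2)) < (Fin.cast hcard.symm (1 : Fin 2)) := by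
    simp [Fin.lt_def]
  obtain ⟨h0, h1⟩ := emb_pair hij _ _ hk
  rw [h0, h1]

lemma subPf_inj (M N : Matrix (Fin n) (Fin n) R) (hM : StronglySkew M) (hN : StronglySkew N)
    (h : ∀ x, subPf M x = subPf N x) : M = N := by
  have key : ∀ i j : Fin n, i < j → M i j = N i j := by
    intro i j hij
    have := h (fun k => decide (k = i ∨ k = j))
    rwa [subPf_pair M hij, subPf_pair N hij] at this
  ext i j
  rcases lt_trichotomy i j with hij | hij | hij
  · exact key i j hij
  · subst hij; rw [hM.2 i, hN.2 i]
  · rw [hM.1 j i, hN.1 j i, key j i hij]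

/-- Strongly skew matrices are determined by their strict upper triangle. -/
def skewEquiv (R : Type*) [CommRing R] (n : ℕ) :
    {M : Matrix (Fin n) (Fin n) R // StronglySkew M} ≃
      ({p : Fin n × Fin n // p.1 < p.2} → R) where
  toFun M := fun p => M.1 p.1.1 p.1.2
  invFun g := ⟨fun i j =>
    if h : i < j then g ⟨(i, j), h⟩ else if h' : j < i then -g ⟨(j, i), h'⟩ else 0, by
    constructor
    · intro i j
      dsimp only
      rcases lt_trichotomy i j with hij | hij | hij
      · rw [dif_pos hij, dif_neg (not_lt_of_gt hij), dif_pos hij]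
      · subst hij; simp
      · rw [dif_pos hij, dif_neg (not_lt_of_gt hij), dif_pos hij, neg_neg]
    · intro i; simp⟩
  left_inv M := by
    ext i j
    show (if h : i < j then M.1 i j else if h' : j < i then -(M.1 j i) else 0) = M.1 i j
    rcases lt_trichotomy i j with hij | hij | hij
    · rw [dif_pos hij]
    · subst hij; rw [dif_neg (lt_irrefl i), dif_neg (lt_irrefl i), (M.2.2 i).symm]
    · rw [dif_neg (not_lt_of_gt hij), dif_pos hij, M.2.1 j i]
  right_inv g := by
    ext p
    exact dif_pos p.2

/-- Pairs `(i,j)` with `i < j` in `Fin n`. -/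
def pairEquiv (n : ℕ) : {p : Fin n × Fin n // p.1 < p.2} ≃ (Σ j : Fin n, Fin (j : ℕ)) where
  toFun p := ⟨p.1.2, ⟨p.1.1, p.2⟩⟩
  invFun q := ⟨(⟨q.2.1, q.2.2.trans q.1.2⟩, q.1), q.2.2⟩
  left_inv p := rfl
  right_inv q := rfl

lemma card_pairs (n : ℕ) :
    Fintype.card {p : Fin n × Fin n // p.1 < p.2} = n * (n - 1) / 2 := by
  rw [Fintype.card_congr (pairEquiv n), Fintype.card_sigma]
  simp only [Fintype.card_fin]
  rw [Fin.sum_univ_eq_sum_range (fun i => i) n, Finset.sum_range_id]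

end Aux

/-- over a finite field of size `s`, the number of normalized standard
signatures on `n` bits is `s^(n(n-1)/2)`; equivalently, `M ↦ (x ↦ Pf(M_x))` is
injective on strongly skew-symmetric matrices (it is surjective onto `B_n` by
definition). -/
theorem card_Bset {F : Type*} [Field F] [Fintype F] {n : ℕ} :
    Nat.card {f : (Fin n → Bool) → F // f ∈ Bset F n} =
      (Fintype.card F) ^ (n * (n - 1) / 2) ∧
    Function.Injective
      (fun M : {M : Matrix (Fin n) (Fin n) F // StronglySkew M} =>
        (fun x => subPf M.1 x : (Fin n → Bool) → F)) := by
  have hinj : Function.Injective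
      (fun M : {M : Matrix (Fin n) (Fin n) F // StronglySkew M} =>
        (fun x => subPf M.1 x : (Fin n → Bool) → F)) := by
    intro M N h
    exact Subtype.ext (subPf_inj M.1 N.1 M.2 N.2 (fun x => congrFun h x))
  refine ⟨?_, hinj⟩
  have hBset : Bset F n = Set.range
      (fun M : {M : Matrix (Fin n) (Fin n) F // StronglySkew M} =>
        (fun x => subPf M.1 x : (Fin n → Bool) → F)) := by
    ext f
    constructor
    · rintro ⟨M, hM, hf⟩
      exact ⟨⟨M, hM⟩, (funext fun x => (hf x).symm)⟩
    · rintro ⟨M, rfl⟩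
      exact ⟨M.1, M.2, fun x => rfl⟩
  have : Nat.card {f : (Fin n → Bool) → F // f ∈ Bset F n}
      = Nat.card {M : Matrix (Fin n) (Fin n) F // StronglySkew M} := by
    rw [show {f : (Fin n → Bool) → F // f ∈ Bset F n}
        = {f : (Fin n → Bool) → F // f ∈ Set.range _} from by rw [hBset]]
    exact Nat.card_range_of_injective hinj
  rw [this, Nat.card_congr (skewEquiv F n), Nat.card_eq_fintype_card,
    Fintype.card_fun, card_pairs]
end

section
/- Flipping a fixed input bit gives a bijection between strictly even and strictly odd n-bit standard signatures: for fixed i, the map f ↦ (x ↦ f(x + e_i)) is an involution on the set of n-bit standard signatures that exchanges A_n^{even} and A_n^{odd}. Hence |A_n^{even}| = |A_n^{odd}|. -/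
open Finset

lemma bxor_cancel {n : ℕ} (x e : Fin n → Bool) : bxor (bxor x e) e = x := by
  funext j; simp only [bxor]; cases x j <;> cases e j <;> rfl

lemma bxor_rot {n : ℕ} (x e xh : Fin n → Bool) :
    bxor (bxor x e) xh = bxor x (bxor xh e) := by
  funext j; simp only [bxor]; cases x j <;> cases e j <;> cases xh j <;> rfl

lemma wt_cast {n : ℕ} (x : Fin n → Bool) (i : Fin n) :
    ((wt (bxor x (eVec i)) : ZMod 2)) = (wt x : ZMod 2) + 1 := by
  simp only [wt, Finset.card_filter]
  push_cast
  have h : ∀ j : Fin n, ((if bxor x (eVec i) j = true then (1:ZMod 2) else 0)) =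
      (if x j = true then (1:ZMod 2) else 0) + (if j = i then (1:ZMod 2) else 0) := by
    intro j
    by_cases h : j = i
    · subst h
      simp only [bxor, eVec]
      cases hx : x j <;> simp [hx] <;> decide
    · simp [bxor, eVec, h]
  rw [Finset.sum_congr rfl (fun j _ => h j), Finset.sum_add_distrib,
    Finset.sum_ite_eq' Finset.univ i (fun _ => (1:ZMod 2))]
  simp

lemma wt_parity {n : ℕ} (x : Fin n → Bool) (i : Fin n) :
    Odd (wt (bxor x (eVec i))) ↔ Even (wt x) := by
  have h := wt_cast x i
  have he : ∀ m : ℕ, Even m ↔ ((m : ZMod 2) = 0) := by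
    intro m
    rw [ZMod.natCast_eq_zero_iff]
    exact even_iff_two_dvd
  rw [← Nat.not_even_iff_odd, he, he, h]
  constructor
  · intro hne
    rcases (by decide : ∀ a : ZMod 2, a = 0 ∨ a = 1) ((wt x : ZMod 2)) with h0 | h1
    · exact h0
    · exact absurd (by rw [h1]; decide) hne
  · intro h0; rw [h0]; decide

lemma std_flip {F : Type*} [Field F] {n : ℕ} (i : Fin n)
    (f : (Fin n → Bool) → F) (hf : IsStdSig f) :
    IsStdSig (fun x => f (bxor x (eVec i))) := by
  rcases hf with h | ⟨β, xh, M, hβ, hM, h⟩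
  · exact Or.inl fun x => h _
  · exact Or.inr ⟨β, bxor xh (eVec i), M, hβ, hM, fun x => by
      simp only [h, bxor_rot]⟩

lemma evenodd_flip {F : Type*} [Field F] {n : ℕ} (i : Fin n)
    (f : (Fin n → Bool) → F) :
    IsEvenSig f ↔ IsOddSig (fun x => f (bxor x (eVec i))) := by
  constructor
  · rintro ⟨hs, ⟨x, hx⟩, hz⟩
    refine ⟨std_flip i f hs, ⟨bxor x (eVec i), ?_⟩, fun y hy => ?_⟩
    · simpa only [bxor_cancel] using hx
    · exact hz _ ((wt_parity y i).mpr hy)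
  · rintro ⟨hs, ⟨x, hx⟩, hz⟩
    refine ⟨?_, ⟨bxor x (eVec i), hx⟩, fun y hy => ?_⟩
    · have := std_flip i _ hs
      simpa only [bxor_cancel] using this
    · have key : Even (wt (bxor y (eVec i))) := by
        have h2 := wt_parity (bxor y (eVec i)) i
        rw [bxor_cancel] at h2
        exact h2.mp hy
      simpa only [bxor_cancel] using hz (bxor y (eVec i)) key

lemma oddeven_flip {F : Type*} [Field F] {n : ℕ} (i : Fin n)
    (f : (Fin n → Bool) → F) :
    IsOddSig f ↔ IsEvenSig (fun x => f (bxor x (eVec i))) := by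
  have h := evenodd_flip i (fun x => f (bxor x (eVec i)))
  simp only [bxor_cancel] at h
  exact h.symm

/-- flipping the `i`-th input bit is an involution on the standard
signatures exchanging strictly even and strictly odd signatures; hence
`|A_n^{even}| = |A_n^{odd}|`. -/
theorem flip_bit_bijection {F : Type*} [Field F] {n : ℕ} (i : Fin n) :
    (∀ f : (Fin n → Bool) → F, IsStdSig f → IsStdSig (fun x => f (bxor x (eVec i)))) ∧
    (∀ (f : (Fin n → Bool) → F) (x : Fin n → Bool),
      f (bxor (bxor x (eVec i)) (eVec i)) = f x) ∧
    (∀ f : (Fin n → Bool) → F,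
      IsEvenSig f ↔ IsOddSig (fun x => f (bxor x (eVec i)))) ∧
    Nat.card {f : (Fin n → Bool) → F // IsEvenSig f} =
      Nat.card {f : (Fin n → Bool) → F // IsOddSig f} := by
  refine ⟨std_flip i, fun f x => by rw [bxor_cancel], evenodd_flip i, ?_⟩
  refine Nat.card_congr
    ⟨fun f => ⟨fun x => f.1 (bxor x (eVec i)), (evenodd_flip i f.1).mp f.2⟩,
     fun f => ⟨fun x => f.1 (bxor x (eVec i)), (oddeven_flip i f.1).mp f.2⟩, ?_, ?_⟩
  · intro f
    exact Subtype.ext (funext fun x => by simp only [bxor_cancel])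
  · intro f
    exact Subtype.ext (funext fun x => by simp only [bxor_cancel])
end
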